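/- There exists a universal constant κ ∈ (0,∞) such that for every T > 0, every Γ as in the context with ‖Γ‖_∞ < ∞, every δ > 0, every measurable map q : [0,T] → Ŝ and every measurable g : X_T → [0,∞) with ∫_{X_T} ℓ(g(s,y)) λ(ds dy) ≤ δ, one has ∫_{X_T} ‖G(q(s),y)‖² g(s,y) λ(ds dy) ≤ κ δ + 4 ‖Γ‖_∞ T. -/

import Mathlib

noncomputable section
open MeasureTheory

/-- The Hilbert space `ℓ²(ℕ)` of square-summable real sequences. -/
abbrev H2 : Type := lp (fun _ : ℕ => ℝ) 2

/-- The simplex `Ŝ` of probability vectors in `ℓ²(ℕ)`. -/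
def simplexS : Set H2 := {q | (∀ i, 0 ≤ q i) ∧ HasSum (fun i => q i) 1}

/-- The set `A_ij(q) ⊆ X = [0,∞)²` (here `K` plays the role of `‖Γ‖_∞`). -/
def Aset (K : ℝ) (Γ : H2 → ℕ → ℕ → ℝ) (q : H2) (i j : ℕ) : Set (ℝ × ℝ) :=
  Set.Ioc (i : ℝ) (i + 1) ×ˢ Set.Ioc ((j : ℝ) * K) ((j : ℝ) * K + q i * Γ q i j)

/-- The map `G : Ŝ × X → ℓ²(ℕ)`, `G(q,y) = ∑_{i ≠ j} (e_j − e_i) 1_{A_ij(q)}(y)`: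
since the `A_ij(q)` are pairwise disjoint, `G(q,y) = e_j − e_i` for the (unique)
pair `(i,j)`, `i ≠ j`, with `y ∈ A_ij(q)`, and `G(q,y) = 0` otherwise. -/
def Gmap (K : ℝ) (Γ : H2 → ℕ → ℕ → ℝ) (q : H2) (y : ℝ × ℝ) : H2 :=
  @dite _ (∃ p : ℕ × ℕ, p.1 ≠ p.2 ∧ y ∈ Aset K Γ q p.1 p.2) (Classical.dec _)
    (fun h => lp.single 2 h.choose.2 1 - lp.single 2 h.choose.1 1) (fun _ => 0)

/-- The rate matrix hypotheses: `Γ_ij(q) ≥ 0` for `i ≠ j`,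
`Γ_ii(q) = −∑_{j≠i} Γ_ij(q)` (a convergent sum), and `K` is an upper bound for
`sup_{q∈Ŝ} sup_i |Γ_ii(q)|` (i.e. `‖Γ‖_∞ ≤ K < ∞`). -/
structure RateMatrix (K : ℝ) (Γ : H2 → ℕ → ℕ → ℝ) : Prop where
  nonneg : ∀ q ∈ simplexS, ∀ i j, i ≠ j → 0 ≤ Γ q i j
  diag : ∀ q ∈ simplexS, ∀ i,
    HasSum (fun j => if j = i then 0 else Γ q i j) (-(Γ q i i))
  bound : ∀ q ∈ simplexS, ∀ i, |Γ q i i| ≤ K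


/-- `ℓ(r) = r log r - r + 1` (with `ℓ(0) = 1`, which holds since `Real.log 0 = 0`). -/
def ell (r : ℝ) : ℝ := r * Real.log r - r + 1

/-- The measure `λ` on `X_T = [0,T] × X`: (Lebesgue on `[0,T]`) ⊗ (Lebesgue on `X`). -/
def XTmeas (T : ℝ) : Measure (ℝ × (ℝ × ℝ)) :=
  (volume.restrict (Set.Icc (0 : ℝ) T)).prod volume

/-! ### Auxiliary lemmas -/

open scoped ENNReal

/-- Upper bound of a product-measure lower integral by the iterated integral, for an
arbitrary (not necessarily measurable) integrand. -/
lemma lintegral_prod_le' {α β : Type*} [MeasurableSpace α] [MeasurableSpace β]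
    (μ : Measure α) (ν : Measure β) [SFinite ν] (f : α × β → ℝ≥0∞) :
    ∫⁻ z, f z ∂(μ.prod ν) ≤ ∫⁻ x, ∫⁻ y, f (x, y) ∂ν ∂μ := by
  rw [lintegral_def]
  refine iSup₂_le fun φ hφ => ?_
  calc φ.lintegral (μ.prod ν) = ∫⁻ z, φ z ∂(μ.prod ν) := (φ.lintegral_eq_lintegral _).symm
    _ = ∫⁻ x, ∫⁻ y, φ (x, y) ∂ν ∂μ := lintegral_prod _ φ.measurable.aemeasurable
    _ ≤ ∫⁻ x, ∫⁻ y, f (x, y) ∂ν ∂μ :=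
        lintegral_mono fun x => lintegral_mono fun y => hφ (x, y)

lemma ell_nonneg' {r : ℝ} (hr : 0 ≤ r) : 0 ≤ ell r := by
  rw [ell]
  rcases eq_or_lt_of_le hr with h | h
  · simp [← h]
  · have h1 := Real.log_le_sub_one_of_pos (inv_pos.mpr h)
    rw [Real.log_inv] at h1
    have h2 : r * r⁻¹ = 1 := mul_inv_cancel₀ h.ne'
    have h3 : r * -Real.log r ≤ r * (r⁻¹ - 1) := mul_le_mul_of_nonneg_left h1 hr
    rw [mul_sub, mul_one, h2, mul_neg] at h3
    linarith

lemma ell_key {r : ℝ} (hr : 0 ≤ r) : r ≤ ell r + (Real.exp 1 - 1) := by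
  rw [ell]
  rcases eq_or_lt_of_le hr with h | h
  · simp [← h]; nlinarith [Real.exp_pos 1]
  · have h1 := Real.log_le_sub_one_of_pos (div_pos (Real.exp_pos 1) h)
    rw [Real.log_div (Real.exp_ne_zero 1) h.ne', Real.log_exp] at h1
    have h2 : r * (Real.exp 1 / r) = Real.exp 1 := by field_simp
    have h3 : r * (1 - Real.log r) ≤ r * (Real.exp 1 / r - 1) :=
      mul_le_mul_of_nonneg_left h1 hr
    rw [mul_sub, mul_sub, mul_one, h2] at h3
    linarith

lemma norm_single_sub_sq {i j : ℕ} (hij : i ≠ j) :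
    ‖(lp.single 2 j 1 : H2) - lp.single 2 i 1‖ ^ 2 = 2 := by
  have hp : (0:ℝ) < (2 : ℝ≥0∞).toReal := by norm_num
  have hnj : ‖(lp.single 2 j 1 : H2)‖ = 1 := by
    simpa using lp.norm_single hp (fun _ => (1:ℝ)) j
  have hni : ‖(lp.single 2 i 1 : H2)‖ = 1 := by
    simpa using lp.norm_single hp (fun _ => (1:ℝ)) i
  have hinner : (inner ℝ (lp.single 2 j (1:ℝ) : H2) (lp.single 2 i 1) : ℝ) = 0 := by
    rw [lp.inner_single_left]
    simp [lp.single_apply_ne (E := fun _ : ℕ => ℝ) 2 i 1 hij.symm, Pi.single_apply, hij.symm]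
  rw [norm_sub_sq_real, hnj, hni, hinner]
  ring

/-- The union of all the `A_ij(q)`, `i ≠ j`. -/
def Uset (K : ℝ) (Γ : H2 → ℕ → ℕ → ℝ) (q : H2) : Set (ℝ × ℝ) :=
  {y | ∃ p : ℕ × ℕ, p.1 ≠ p.2 ∧ y ∈ Aset K Γ q p.1 p.2}

lemma Uset_eq (K : ℝ) (Γ : H2 → ℕ → ℕ → ℝ) (q : H2) :
    Uset K Γ q = ⋃ p : ℕ × ℕ, ⋃ (_ : p.1 ≠ p.2), Aset K Γ q p.1 p.2 := by
  ext y; simp [Uset]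

lemma measurableSet_Uset (K : ℝ) (Γ : H2 → ℕ → ℕ → ℝ) (q : H2) :
    MeasurableSet (Uset K Γ q) := by
  rw [Uset_eq]
  exact MeasurableSet.iUnion fun p => MeasurableSet.iUnion fun _ =>
    (measurableSet_Ioc.prod measurableSet_Ioc)

lemma volume_Aset (K : ℝ) (Γ : H2 → ℕ → ℕ → ℝ) (q : H2) (i j : ℕ) :
    volume (Aset K Γ q i j) = ENNReal.ofReal (q i * Γ q i j) := by
  rw [Aset, Measure.volume_eq_prod, Measure.prod_prod, Real.volume_Ioc, Real.volume_Ioc]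
  simp

lemma volume_Uset_le {K : ℝ} {Γ : H2 → ℕ → ℕ → ℝ} (hΓ : RateMatrix K Γ) {q : H2}
    (hq : q ∈ simplexS) : volume (Uset K Γ q) ≤ ENNReal.ofReal K := by
  rw [Uset_eq]
  calc volume (⋃ p : ℕ × ℕ, ⋃ (_ : p.1 ≠ p.2), Aset K Γ q p.1 p.2)
      ≤ ∑' p : ℕ × ℕ, volume (⋃ (_ : p.1 ≠ p.2), Aset K Γ q p.1 p.2) := measure_iUnion_le _
    _ ≤ ∑' p : ℕ × ℕ, ENNReal.ofReal (q p.1 * (if p.2 = p.1 then 0 else Γ q p.1 p.2)) := by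
        refine ENNReal.tsum_le_tsum fun p => ?_
        by_cases hp : p.1 ≠ p.2
        · rw [Set.iUnion_eq_if, if_pos hp, volume_Aset, if_neg (Ne.symm hp)]
        · simp [hp]
    _ = ∑' i : ℕ, ∑' j : ℕ, ENNReal.ofReal (q i * (if j = i then 0 else Γ q i j)) :=
        ENNReal.tsum_prod (f := fun i j => ENNReal.ofReal (q i * (if j = i then 0 else Γ q i j)))
    _ ≤ ∑' i : ℕ, ENNReal.ofReal (q i * K) := by
        refine ENNReal.tsum_le_tsum fun i => ?_
        have hs : HasSum (fun j => q i * (if j = i then 0 else Γ q i j))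
            (q i * (-(Γ q i i))) := (hΓ.diag q hq i).mul_left _
        have hnn : ∀ j, 0 ≤ q i * (if j = i then 0 else Γ q i j) := by
          intro j
          refine mul_nonneg (hq.1 i) ?_
          split_ifs with h
          · exact le_refl 0
          · exact hΓ.nonneg q hq i j fun hh => h hh.symm
        rw [← ENNReal.ofReal_tsum_of_nonneg hnn hs.summable, hs.tsum_eq]
        refine ENNReal.ofReal_le_ofReal ?_
        refine mul_le_mul_of_nonneg_left ?_ (hq.1 i)
        exact (neg_le_abs _).trans (hΓ.bound q hq i)
    _ = ENNReal.ofReal K := by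
        have hnn : ∀ i, 0 ≤ q i * K := fun i =>
          mul_nonneg (hq.1 i) ((abs_nonneg _).trans (hΓ.bound q hq 0))
        have hs : HasSum (fun i => q i * K) (1 * K) := hq.2.mul_right K
        rw [← ENNReal.ofReal_tsum_of_nonneg hnn hs.summable, hs.tsum_eq, one_mul]

lemma pointwise_bound (K : ℝ) (Γ : H2 → ℕ → ℕ → ℝ) (q : H2) (y : ℝ × ℝ) {g : ℝ}
    (hg : 0 ≤ g) :
    ENNReal.ofReal (‖Gmap K Γ q y‖ ^ 2 * g) ≤
      2 * ENNReal.ofReal (ell g) +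
        (Uset K Γ q).indicator (fun _ => ENNReal.ofReal (2 * (Real.exp 1 - 1))) y := by
  rw [Gmap]
  by_cases h : ∃ p : ℕ × ℕ, p.1 ≠ p.2 ∧ y ∈ Aset K Γ q p.1 p.2
  · rw [dif_pos h, norm_single_sub_sq h.choose_spec.1,
      Set.indicator_of_mem (show y ∈ Uset K Γ q from h)]
    have hle : 2 * g ≤ 2 * ell g + 2 * (Real.exp 1 - 1) := by
      have := ell_key hg; linarith
    calc ENNReal.ofReal (2 * g) ≤ ENNReal.ofReal (2 * ell g + 2 * (Real.exp 1 - 1)) :=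
          ENNReal.ofReal_le_ofReal hle
      _ = ENNReal.ofReal (2 * ell g) + ENNReal.ofReal (2 * (Real.exp 1 - 1)) :=
          ENNReal.ofReal_add (by have := ell_nonneg' hg; linarith)
            (by nlinarith [Real.add_one_le_exp 1])
      _ = 2 * ENNReal.ofReal (ell g) + ENNReal.ofReal (2 * (Real.exp 1 - 1)) := by
          rw [ENNReal.ofReal_mul (by norm_num : (0:ℝ) ≤ 2), ENNReal.ofReal_ofNat]
  · rw [dif_neg h]
    simp

/-- There is a universal constant `κ ∈ (0,∞)` such that for every `T > 0`, every
rate matrix `Γ` with `‖Γ‖_∞ ≤ K < ∞`, every `δ > 0`, every measurable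
`q : [0,T] → Ŝ` and every measurable `g : X_T → [0,∞)` with
`∫_{X_T} ℓ(g) dλ ≤ δ`, one has
`∫_{X_T} ‖G(q(s),y)‖² g(s,y) λ(ds dy) ≤ κ δ + 4 ‖Γ‖_∞ T`. -/
theorem stmt10 :
    ∃ κ : ℝ, 0 < κ ∧
      ∀ T : ℝ, 0 < T → ∀ K : ℝ, 0 ≤ K →
      ∀ Γ : H2 → ℕ → ℕ → ℝ, RateMatrix K Γ →
      ∀ δ : ℝ, 0 < δ →
      ∀ q : ℝ → H2, StronglyMeasurable q → (∀ s, q s ∈ simplexS) →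
      ∀ g : ℝ × (ℝ × ℝ) → ℝ, Measurable g → (∀ z, 0 ≤ g z) →
      (∫⁻ z, ENNReal.ofReal (ell (g z)) ∂(XTmeas T) ≤ ENNReal.ofReal δ) →
      ∫⁻ z, ENNReal.ofReal (‖Gmap K Γ (q z.1) z.2‖ ^ 2 * g z) ∂(XTmeas T)
        ≤ ENNReal.ofReal (κ * δ + 4 * K * T) := by
  refine ⟨2, by norm_num, ?_⟩
  intro T hT K hK Γ hΓ δ hδ q hq hqS g hg hg0 hgδ
  set μ := volume.restrict (Set.Icc (0 : ℝ) T) with hμ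
  have hmeas_ell : Measurable fun z : ℝ × (ℝ × ℝ) => ENNReal.ofReal (ell (g z)) := by
    apply ENNReal.measurable_ofReal.comp
    unfold ell
    exact ((hg.mul (Real.measurable_log.comp hg)).sub hg).add measurable_const
  have hmeas_ell_s : ∀ s : ℝ, Measurable fun y : ℝ × ℝ => ENNReal.ofReal (ell (g (s, y))) :=
    fun s => hmeas_ell.comp measurable_prodMk_left
  set C : ℝ≥0∞ := ENNReal.ofReal (2 * (Real.exp 1 - 1)) * ENNReal.ofReal K with hC
  have inner_bd : ∀ s : ℝ,
      ∫⁻ y, ENNReal.ofReal (‖Gmap K Γ (q s) y‖ ^ 2 * g (s, y)) ∂volume ≤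
        2 * (∫⁻ y, ENNReal.ofReal (ell (g (s, y))) ∂volume) + C := by
    intro s
    calc ∫⁻ y, ENNReal.ofReal (‖Gmap K Γ (q s) y‖ ^ 2 * g (s, y)) ∂volume
        ≤ ∫⁻ y, (2 * ENNReal.ofReal (ell (g (s, y))) +
            (Uset K Γ (q s)).indicator
              (fun _ => ENNReal.ofReal (2 * (Real.exp 1 - 1))) y) ∂volume :=
          lintegral_mono fun y => pointwise_bound K Γ (q s) y (hg0 (s, y))
      _ = 2 * (∫⁻ y, ENNReal.ofReal (ell (g (s, y))) ∂volume) +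
            ∫⁻ y, (Uset K Γ (q s)).indicator
              (fun _ => ENNReal.ofReal (2 * (Real.exp 1 - 1))) y ∂volume := by
          rw [lintegral_add_left ((hmeas_ell_s s).const_mul 2),
            lintegral_const_mul 2 (hmeas_ell_s s)]
      _ ≤ 2 * (∫⁻ y, ENNReal.ofReal (ell (g (s, y))) ∂volume) + C := by
          refine add_le_add_right ?_ _
          rw [lintegral_indicator (measurableSet_Uset K Γ (q s)) _, setLIntegral_const]
          exact mul_le_mul_right (volume_Uset_le hΓ (hqS s)) _
  have step1 : ∫⁻ z, ENNReal.ofReal (‖Gmap K Γ (q z.1) z.2‖ ^ 2 * g z) ∂(XTmeas T) ≤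
      ∫⁻ s, (2 * (∫⁻ y, ENNReal.ofReal (ell (g (s, y))) ∂volume) + C) ∂μ := by
    refine le_trans (lintegral_prod_le' μ volume _) ?_
    exact lintegral_mono fun s => inner_bd s
  have hImeas : Measurable fun s : ℝ => ∫⁻ y, ENNReal.ofReal (ell (g (s, y))) ∂volume :=
    Measurable.lintegral_prod_right' hmeas_ell
  have hμuniv : μ Set.univ = ENNReal.ofReal T := by
    rw [hμ, Measure.restrict_apply_univ, Real.volume_Icc, sub_zero]
  have step2 : ∫⁻ s, (2 * (∫⁻ y, ENNReal.ofReal (ell (g (s, y))) ∂volume) + C) ∂μ =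
      2 * (∫⁻ z, ENNReal.ofReal (ell (g z)) ∂(XTmeas T)) + C * ENNReal.ofReal T := by
    rw [lintegral_add_left (hImeas.const_mul 2), lintegral_const_mul 2 hImeas,
      lintegral_const, hμuniv]
    congr 2
    rw [XTmeas]
    exact (lintegral_prod _ hmeas_ell.aemeasurable).symm
  refine le_trans step1 (le_trans (le_of_eq step2) ?_)
  have hbound : 2 * (∫⁻ z, ENNReal.ofReal (ell (g z)) ∂(XTmeas T)) + C * ENNReal.ofReal T ≤
      2 * ENNReal.ofReal δ + C * ENNReal.ofReal T :=
    add_le_add_left (mul_le_mul_right hgδ 2) _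
  refine le_trans hbound ?_
  have he1 : (0:ℝ) ≤ 2 * (Real.exp 1 - 1) := by nlinarith [Real.exp_pos 1, Real.add_one_le_exp 1]
  have hCT : C * ENNReal.ofReal T = ENNReal.ofReal (2 * (Real.exp 1 - 1) * K * T) := by
    rw [hC, ← ENNReal.ofReal_mul he1, ← ENNReal.ofReal_mul (by positivity)]
  have h2δ : 2 * ENNReal.ofReal δ = ENNReal.ofReal (2 * δ) := by
    rw [ENNReal.ofReal_mul (by norm_num : (0:ℝ) ≤ 2), ENNReal.ofReal_ofNat]
  rw [hCT, h2δ, ← ENNReal.ofReal_add (by positivity) (by positivity)]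
  refine ENNReal.ofReal_le_ofReal ?_
  have hexp : Real.exp 1 < 2.7182818286 := Real.exp_one_lt_d9
  nlinarith [mul_nonneg hK hT.le, hδ.le]
end
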